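/- In any group, given elements b₁, b₂, b₃ satisfying the braid relation Br(b₂,b₃) (b₂b₃b₂ = b₃b₂b₃), the commutation relation Co(b₁, b₃^{b₂}) (i.e., b₁ commutes with b₂⁻¹b₃b₂) holds if and only if Co(b₂, b₁^{b₃}) holds (i.e., b₂ commutes with b₃⁻¹b₁b₃). -/
import Mathlib

theorem type_II_relation_equiv {G : Type*} [Group G] (b₁ b₂ b₃ : G)
    (hbr : b₂ * b₃ * b₂ = b₃ * b₂ * b₃) :
    (b₁ * (b₂⁻¹ * b₃ * b₂) = (b₂⁻¹ * b₃ * b₂) * b₁) ↔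
      (b₂ * (b₃⁻¹ * b₁ * b₃) = (b₃⁻¹ * b₁ * b₃) * b₂) := by
  have h : b₂⁻¹ * b₃ * b₂ = b₃ * b₂ * b₃⁻¹ := by
    have := congrArg (fun x => b₂⁻¹ * x * b₃⁻¹) hbr
    simpa [mul_assoc] using this.symm
  rw [h]
  constructor
  · intro hc
    have := congrArg (fun x => b₃⁻¹ * x * b₃) hc
    simp only [mul_assoc] at this ⊢
    simpa [mul_assoc] using this.symm
  · intro hc
    have := congrArg (fun x => b₃ * x * b₃⁻¹) hc
    simpa [mul_assoc] using this.symm
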